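/- Borda is the unique positional scoring rule (up to linear equivalence of scores) that satisfies independence of unanimous losers and reversal symmetry. -/

import Mathlib

/-- Total score of candidate `a`: in race `i`, `P i` sends each candidate to their
(0-indexed) finishing position, which is worth `s` points. -/
def TotalScore {n k : ℕ} (s : Fin k → ℝ) (P : Fin n → Equiv.Perm (Fin k)) (a : Fin k) : ℝ :=
  ∑ i, s (P i a)

/-- Total score after removing a unanimous loser (position `k` in every race):
remaining candidates keep their positions, scored by the `k`-candidate vector `s`. -/
def RTotalL {n k : ℕ} (s : Fin k → ℝ) (P : Fin n → Equiv.Perm (Fin (k+1))) (a : Fin (k+1)) : ℝ :=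
  ∑ i, if h : (P i a : ℕ) < k then s ⟨(P i a : ℕ), h⟩ else 0

/-- Independence of unanimous losers: in any nonempty profile with a unanimous loser, the
loser is ranked strictly last and removing them leaves the ranking of the others unchanged. -/
def IndepUnanimousLosers (m : ℕ) (s : ∀ k, Fin k → ℝ) : Prop :=
  ∀ k, k + 1 ≤ m → ∀ n, 0 < n → ∀ P : Fin n → Equiv.Perm (Fin (k+1)), ∀ c : Fin (k+1),
    (∀ i, (P i c : ℕ) = k) →
    (∀ a, a ≠ c → TotalScore (s (k+1)) P c < TotalScore (s (k+1)) P a) ∧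
    (∀ a b, a ≠ c → b ≠ c →
      (TotalScore (s (k+1)) P a ≤ TotalScore (s (k+1)) P b ↔
        RTotalL (s k) P a ≤ RTotalL (s k) P b))

/-- The reversed profile: every race order is inverted (position `j` becomes `k-1-j`). -/
def revProfile {n k : ℕ} (P : Fin n → Equiv.Perm (Fin k)) : Fin n → Equiv.Perm (Fin k) :=
  fun i => (P i).trans Fin.revPerm

/-- Reversal symmetry: whenever (with at least two candidates) a candidate is the unique
winner of a profile, that candidate is not the unique winner of the reversed profile. -/
def ReversalSymmetry (m : ℕ) (s : ∀ k, Fin k → ℝ) : Prop :=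
  ∀ k, 2 ≤ k → k ≤ m → ∀ n : ℕ, ∀ P : Fin n → Equiv.Perm (Fin k), ∀ a : Fin k,
    (∀ b, b ≠ a → TotalScore (s k) P b < TotalScore (s k) P a) →
    ¬ (∀ b, b ≠ a →
        TotalScore (s k) (revProfile P) b < TotalScore (s k) (revProfile P) a)


private lemma sum_affine' {n : ℕ} (α C : ℝ) (f : Fin n → ℝ) :
    ∑ i, (α * f i + C) = α * ∑ i, f i + n * C := by
  rw [Finset.sum_add_distrib, Finset.sum_const, Finset.mul_sum]
  simp [nsmul_eq_mul]

private lemma stepC (m : ℕ) (s : ∀ k, Fin k → ℝ) (hR : ReversalSymmetry m s)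
    (K : ℕ) (hk : K + 2 ≤ m) :
    ∀ p q : Fin (K+2),
      s (K+2) p + s (K+2) p.rev = s (K+2) q + s (K+2) q.rev := by
  set u := s (K+2) with hu
  set W : Fin (K+2) → ℝ := fun j => u j + u j.rev with hW
  obtain ⟨p, hp⟩ := Finite.exists_max W
  suffices h : ∀ q, W q = W p by
    intro x y; have := h x; have := h y
    simp only [hW] at *; linarith
  intro q
  by_contra hne
  have hq : W q < W p := lt_of_le_of_ne (hp q) hne
  have hpq : p ≠ q := by rintro rfl; exact hne rfl
  set σ : Fin (K+2) → Equiv.Perm (Fin (K+2)) :=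
    fun b => if b = p then 1 else Equiv.swap b q with hσ
  have hσp : ∀ b, σ b p = p := by
    intro b
    by_cases hbp : b = p
    · simp [hσ, hbp]
    · simp only [hσ, if_neg hbp]
      exact Equiv.swap_apply_of_ne_of_ne (Ne.symm hbp) hpq
  set P : Fin ((K+2) + (K+2)) → Equiv.Perm (Fin (K+2)) :=
    fun i => Fin.addCases (fun b => σ b) (fun b => (σ b).trans Fin.revPerm) i with hP
  have hTS : ∀ x, TotalScore u P x = ∑ b : Fin (K+2), W (σ b x) := by
    intro x
    rw [TotalScore, Fin.sum_univ_add]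
    simp only [hP, Fin.addCases_left, Fin.addCases_right, Equiv.trans_apply,
      Fin.revPerm_apply]
    rw [← Finset.sum_add_distrib]
  have hTSr : ∀ x, TotalScore u (revProfile P) x = ∑ b : Fin (K+2), W (σ b x) := by
    intro x
    rw [TotalScore, Fin.sum_univ_add]
    simp only [revProfile, hP, Fin.addCases_left, Fin.addCases_right, Equiv.trans_apply,
      Fin.revPerm_apply, Fin.rev_rev]
    rw [← Finset.sum_add_distrib]
    refine Finset.sum_congr rfl fun b _ => ?_
    simp [hW, add_comm]
  have hwin : ∀ b, b ≠ p → (∑ b' : Fin (K+2), W (σ b' b)) < ∑ b' : Fin (K+2), W (σ b' p) := by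
    intro b hbp
    refine Finset.sum_lt_sum (fun b' _ => ?_) ⟨b, Finset.mem_univ b, ?_⟩
    · rw [hσp b']; exact hp _
    · rw [hσp b]
      have : σ b b = q := by simp only [hσ, if_neg hbp]; exact Equiv.swap_apply_left b q
      rw [this]; exact hq
  have hcontra := hR (K+2) (by omega) hk _ P p (by intro b hb; rw [hTS, hTS]; exact hwin b hb)
  exact hcontra (by intro b hb; rw [hTSr, hTSr]; exact hwin b hb)

private lemma stepB (m : ℕ) (s : ∀ k, Fin k → ℝ) (hI : IndepUnanimousLosers m s)
    (K : ℕ) (hk : K + 2 ≤ m) (α' β' : ℝ)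
    (hv : ∀ j : Fin (K+1), s (K+1) j = α' * (((K+1 : ℕ) : ℝ) - 1 - (j : ℕ)) + β')
    (j : ℕ) (hj1 : 1 ≤ j) (hjK : j + 1 ≤ K)
    (a b c e : Fin (K+2)) (hav : (a : ℕ) = j - 1) (hbv : (b : ℕ) = j)
    (hcv : (c : ℕ) = K + 1) (hev : (e : ℕ) = j + 1) :
    s (K+2) a + s (K+2) e = 2 * s (K+2) b := by
  set P : Fin 2 → Equiv.Perm (Fin (K+2)) := ![1, Equiv.swap a e] with hPd
  have hPc : ∀ i, (P i c : ℕ) = K+1 := by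
    intro i
    fin_cases i
    · exact hcv
    · show (Equiv.swap a e c : ℕ) = K+1
      rw [Equiv.swap_apply_of_ne_of_ne]
      · exact hcv
      · rw [Ne, Fin.ext_iff, hcv, hav]; omega
      · rw [Ne, Fin.ext_iff, hcv, hev]; omega
  have hane : a ≠ c := by rw [Ne, Fin.ext_iff, hav, hcv]; omega
  have hbne : b ≠ c := by rw [Ne, Fin.ext_iff, hbv, hcv]; omega
  have habne : a ≠ b := by rw [Ne, Fin.ext_iff, hav, hbv]; omega
  have hbe : b ≠ e := by rw [Ne, Fin.ext_iff, hbv, hev]; omega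
  have hiff := (hI (K+1) hk 2 two_pos P c hPc).2
  have hP0 : ∀ x : Fin (K+2), P 0 x = x := fun x => rfl
  have hP1a : P 1 a = e := by
    show Equiv.swap a e a = e; exact Equiv.swap_apply_left a e
  have hP1b : P 1 b = b := by
    show Equiv.swap a e b = b
    exact Equiv.swap_apply_of_ne_of_ne (Ne.symm habne) hbe
  have hTa : TotalScore (s (K+2)) P a = s (K+2) a + s (K+2) e := by
    rw [TotalScore, Fin.sum_univ_two, hP0, hP1a]
  have hTb : TotalScore (s (K+2)) P b = s (K+2) b + s (K+2) b := by
    rw [TotalScore, Fin.sum_univ_two, hP0, hP1b]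
  have haK : (a : ℕ) < K + 1 := by omega
  have hbK : (b : ℕ) < K + 1 := by omega
  have heK : (e : ℕ) < K + 1 := by omega
  have hRa : RTotalL (s (K+1)) P a = s (K+1) ⟨(a:ℕ), haK⟩ + s (K+1) ⟨(e:ℕ), heK⟩ := by
    rw [RTotalL, Fin.sum_univ_two, hP0, hP1a, dif_pos haK, dif_pos heK]
  have hRb : RTotalL (s (K+1)) P b = s (K+1) ⟨(b:ℕ), hbK⟩ + s (K+1) ⟨(b:ℕ), hbK⟩ := by
    rw [RTotalL, Fin.sum_univ_two, hP0, hP1b, dif_pos hbK]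
  have hReq : RTotalL (s (K+1)) P a = RTotalL (s (K+1)) P b := by
    rw [hRa, hRb, hv, hv, hv]
    simp only [hav, hbv, hev]
    have hc1 : ((j - 1 : ℕ) : ℝ) = (j : ℝ) - 1 := by
      push_cast [Nat.cast_sub hj1]; ring
    simp only [hc1]; push_cast; ring
  have h1 : TotalScore (s (K+2)) P a ≤ TotalScore (s (K+2)) P b :=
    (hiff a b hane hbne).mpr (le_of_eq hReq)
  have h2 : TotalScore (s (K+2)) P b ≤ TotalScore (s (K+2)) P a :=
    (hiff b a hbne hane).mpr (le_of_eq hReq.symm)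
  have h3 := le_antisymm h1 h2
  rw [hTa, hTb] at h3
  linarith

private lemma stepA (m : ℕ) (s : ∀ k, Fin k → ℝ) (hI : IndepUnanimousLosers m s)
    (K : ℕ) (hk : K + 2 ≤ m) :
    s (K+2) ⟨K+1, by omega⟩ < s (K+2) ⟨K, by omega⟩ := by
  have h := (hI (K+1) hk 1 one_pos (fun _ => 1) ⟨K+1, by omega⟩ (fun i => rfl)).1
    ⟨K, by omega⟩ (by simp [Fin.ext_iff])
  simpa [TotalScore, Fin.sum_univ_one] using h

private lemma mainstep (m : ℕ) (s : ∀ k, Fin k → ℝ) (hI : IndepUnanimousLosers m s)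
    (hR : ReversalSymmetry m s) (K : ℕ) (hk : K + 2 ≤ m) (α' β' : ℝ)
    (hv : ∀ j : Fin (K+1), s (K+1) j = α' * (((K+1 : ℕ) : ℝ) - 1 - (j : ℕ)) + β') :
    ∃ α : ℝ, 0 < α ∧ ∃ β : ℝ,
        ∀ j : Fin (K+2), s (K+2) j = α * (((K+2 : ℕ) : ℝ) - 1 - (j : ℕ)) + β := by
  have hA := stepA m s hI K hk
  have hC := stepC m s hR K hk
  set δ := s (K+2) ⟨0, by omega⟩ - s (K+2) ⟨1, by omega⟩ with hδ
  have hD1 : ∀ j, ∀ _hjK : j ≤ K, s (K+2) ⟨j, by omega⟩ = s (K+2) ⟨0, by omega⟩ - j * δ := by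
    intro j
    induction j using Nat.strong_induction_on with
    | _ j IH2 =>
    intro hjK
    match j, hjK with
    | 0, _ => simp
    | 1, h1K => rw [hδ]; push_cast; ring
    | (i+2), hiK =>
      have h1 := IH2 (i+1) (by omega) (by omega)
      have h0 := IH2 i (by omega) (by omega)
      have hb := stepB m s hI K hk α' β' hv (i+1) (by omega) (by omega)
        ⟨i, by omega⟩ ⟨i+1, by omega⟩ ⟨K+1, by omega⟩ ⟨i+2, by omega⟩
        rfl rfl rfl rfl
      push_cast
      push_cast at h1 h0
      linarith
  have hrev0 : (Fin.rev (⟨0, by omega⟩ : Fin (K+2))) = ⟨K+1, by omega⟩ := by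
    ext; simp [Fin.val_rev]
  have hrev1 : (Fin.rev (⟨1, by omega⟩ : Fin (K+2))) = ⟨K, by omega⟩ := by
    ext; simp [Fin.val_rev]
  have hD2 : s (K+2) ⟨K+1, by omega⟩ = s (K+2) ⟨K, by omega⟩ - δ := by
    have h5 := hC ⟨0, by omega⟩ ⟨1, by omega⟩
    rw [hrev0, hrev1] at h5
    rw [hδ]; linarith
  have hδpos : 0 < δ := by
    linarith [hA, hD2]
  refine ⟨δ, hδpos, s (K+2) ⟨K+1, by omega⟩, ?_⟩
  have hKp1 : s (K+2) ⟨K+1, by omega⟩ = s (K+2) ⟨0, by omega⟩ - ((K:ℝ)+1) * δ := by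
    have hK := hD1 K le_rfl
    nlinarith [hD2, hK]
  intro j
  obtain ⟨jv, hjv⟩ := j
  have hcase : jv ≤ K ∨ jv = K + 1 := by omega
  rcases hcase with hle | heq
  · rw [hD1 jv hle, hKp1]
    push_cast; ring
  · subst heq
    rw [hKp1]
    push_cast; ring

/-- Borda is the unique scoring rule (up to linear equivalence) satisfying independence of
unanimous losers and reversal symmetry. -/
theorem stmt12 (m : ℕ) (s : ∀ k, Fin k → ℝ) :
    (IndepUnanimousLosers m s ∧ ReversalSymmetry m s) ↔
      ∀ k, k ≤ m → ∃ α : ℝ, 0 < α ∧ ∃ β : ℝ,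
        ∀ j : Fin k, s k j = α * ((k : ℝ) - 1 - (j : ℕ)) + β := by
  constructor
  · rintro ⟨hI, hR⟩
    intro k
    induction k using Nat.strong_induction_on with
    | _ k IH =>
    intro hk
    match k, hk, IH with
    | 0, _, _ => exact ⟨1, one_pos, 0, fun j => j.elim0⟩
    | 1, _, _ =>
      refine ⟨1, one_pos, s 1 0, fun j => ?_⟩
      have hj : j = 0 := Subsingleton.elim _ _
      subst hj; simp
    | (K+2), hk, IH =>
      obtain ⟨α', hα', β', hv⟩ := IH (K+1) (by omega) (by omega)
      exact mainstep m s hI hR K hk α' β' hv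
  · intro h
    constructor
    · intro k hk n hn P c hc
      obtain ⟨α, hα, β, hs1⟩ := h (k+1) hk
      obtain ⟨α', hα', β', hs0⟩ := h k (by omega)
      have hlt : ∀ a : Fin (k+1), a ≠ c → ∀ i, ((P i a : ℕ)) < k := by
        intro a ha i
        have h1 : P i a ≠ P i c := fun hh => ha ((P i).injective hh)
        have h2 : (P i a : ℕ) < k + 1 := (P i a).isLt
        have h3 : (P i a : ℕ) ≠ (P i c : ℕ) := fun hh => h1 (Fin.ext hh)
        rw [hc i] at h3; omega
      constructor
      · intro a ha
        have hne : (Finset.univ : Finset (Fin n)).Nonempty := by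
          simpa [Finset.univ_nonempty_iff, Fin.pos_iff_nonempty] using hn
        refine Finset.sum_lt_sum_of_nonempty hne ?_
        intro i _
        rw [hs1, hs1, hc i]
        have h4 : ((P i a : ℕ) : ℝ) < (k : ℝ) := by exact_mod_cast hlt a ha i
        push_cast
        nlinarith
      · intro a b ha hb
        have key : ∀ x, x ≠ c →
            TotalScore (s (k+1)) P x = α * (∑ i, ((k:ℝ) - ((P i x : ℕ) : ℝ))) + n * β ∧
            RTotalL (s k) P x = α' * (∑ i, ((k:ℝ) - ((P i x : ℕ) : ℝ))) + n * (β' - α') := by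
          intro x hx
          constructor
          · rw [TotalScore, ← sum_affine']
            refine Finset.sum_congr rfl fun i _ => ?_
            rw [hs1]; push_cast; ring
          · rw [RTotalL, ← sum_affine']
            refine Finset.sum_congr rfl fun i _ => ?_
            rw [dif_pos (hlt x hx i), hs0]; push_cast; ring
        obtain ⟨ka, ra⟩ := key a ha
        obtain ⟨kb, rb⟩ := key b hb
        set Sa := ∑ i, ((k:ℝ) - ((P i a : ℕ) : ℝ)) with hSa
        set Sb := ∑ i, ((k:ℝ) - ((P i b : ℕ) : ℝ)) with hSb
        rw [ka, kb, ra, rb]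
        constructor <;> intro hle
        · have h1 : α * Sa ≤ α * Sb := by linarith
          have h2 : Sa ≤ Sb := (mul_le_mul_iff_right₀ hα).mp h1
          have h3 : α' * Sa ≤ α' * Sb := (mul_le_mul_iff_right₀ hα').mpr h2
          linarith
        · have h1 : α' * Sa ≤ α' * Sb := by linarith
          have h2 : Sa ≤ Sb := (mul_le_mul_iff_right₀ hα').mp h1
          have h3 : α * Sa ≤ α * Sb := (mul_le_mul_iff_right₀ hα).mpr h2
          linarith
    · intro k hk2 hkm n P a hwin hwin'
      obtain ⟨α, hα, β, hs1⟩ := h k hkm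
      have : Nontrivial (Fin k) := Fin.nontrivial_iff_two_le.mpr hk2
      obtain ⟨b, hb⟩ := exists_ne a
      have hTS : ∀ x, TotalScore (s k) P x
          = α * (∑ i, (((k:ℝ) - 1) - ((P i x : ℕ) : ℝ))) + n * β := by
        intro x
        rw [TotalScore, ← sum_affine']
        refine Finset.sum_congr rfl fun i _ => ?_
        rw [hs1]
      have hTSr : ∀ x, TotalScore (s k) (revProfile P) x
          = α * (∑ i, (((P i x : ℕ) : ℝ))) + n * β := by
        intro x
        rw [TotalScore, ← sum_affine']
        refine Finset.sum_congr rfl fun i _ => ?_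
        have hv : ((revProfile P i x : ℕ) : ℝ) = (k : ℝ) - 1 - ((P i x : ℕ) : ℝ) := by
          show (((Fin.revPerm (P i x) : Fin k) : ℕ) : ℝ) = _
          have h1 : (P i x : ℕ) + 1 ≤ k := (P i x).isLt
          simp only [Fin.revPerm_apply, Fin.val_rev]
          push_cast [Nat.cast_sub h1]
          ring
        rw [hs1, hv]; ring
      set ga := ∑ i, (((P i a : ℕ) : ℝ)) with hga
      set gb := ∑ i, (((P i b : ℕ) : ℝ)) with hgb
      have h1 : ga < gb := by
        have hw := hwin b hb
        rw [hTS, hTS] at hw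
        have h2 : α * (∑ i, (((k:ℝ) - 1) - ((P i b : ℕ) : ℝ)))
            < α * (∑ i, (((k:ℝ) - 1) - ((P i a : ℕ) : ℝ))) := by linarith
        have h3 := (mul_lt_mul_iff_right₀ hα).mp h2
        simp only [Finset.sum_sub_distrib, Finset.sum_const, Finset.card_univ] at h3
        rw [hga, hgb]; linarith
      have h2 : gb < ga := by
        have hw := hwin' b hb
        rw [hTSr, hTSr] at hw
        have h2 : α * gb < α * ga := by linarith
        exact (mul_lt_mul_iff_right₀ hα).mp h2
      exact absurd h2 (lt_asymm h1)
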